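/- (Asymptotics as y → −∞.) Let 1 ≤ i ≤ N−M and c = k_i + k_{M+i}. Then: (a) for every ε > 0 there exists Ξ such that for every ξ ≤ −Ξ there exists Y with |w_1(c·y + ξ, y) − Σ_{j=i+1}^{M+i} k_j| < ε for all y ≤ −Y; (b) for every ε > 0 there exists Ξ such that for every ξ ≥ Ξ there exists Y with |w_1(c·y + ξ, y) − Σ_{j=i}^{M+i−1} k_j| < ε for all y ≤ −Y. In other words, along x = c y + ξ with y → −∞, w_1 → Σ_{j=i+1}^{M+i} k_j as ξ → −∞ and w_1 → Σ_{j=i}^{M+i−1} k_j as ξ → +∞. -/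

import Mathlib

open Filter Finset Real Topology

private lemma sum_tendsto_aux
    (P : Finset (Finset ℕ)) (A B : Finset ℕ) (hA : A ∈ P) (hB : B ∈ P) (hAB : A ≠ B)
    (C t a : Finset ℕ → ℝ)
    (haAB : a A = a B)
    (hgap : ∀ S ∈ P, S ≠ A → S ≠ B → a B < a S) :
    Tendsto (fun y => ∑ S ∈ P, C S * Real.exp ((a S - a B) * y + t S)) atBot
      (𝓝 (C A * Real.exp (t A) + C B * Real.exp (t B))) := by
  have hsum : C A * Real.exp (t A) + C B * Real.exp (t B)
      = ∑ S ∈ P, (if S = A then C A * Real.exp (t A)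
          else if S = B then C B * Real.exp (t B) else 0) := by
    rw [Finset.sum_eq_add_of_mem A B hA hB hAB ?_]
    · simp [hAB, Ne.symm hAB]
    · intro S hS hne
      simp [hne.1, hne.2]
  rw [hsum]
  apply tendsto_finset_sum
  intro S hS
  by_cases h1 : S = A
  · subst h1
    have hz : a S - a B = 0 := sub_eq_zero.mpr haAB
    simp only [if_pos rfl, hz, zero_mul, zero_add]
    exact tendsto_const_nhds
  · by_cases h2 : S = B
    · subst h2
      simp only [if_neg h1, if_pos rfl, sub_self, zero_mul, zero_add]
      exact tendsto_const_nhds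
    · simp only [if_neg h1, if_neg h2]
      have hpos : 0 < a S - a B := sub_pos.mpr (hgap S hS h1 h2)
      have h3 : Tendsto (fun y : ℝ => (a S - a B) * y + t S) atBot atBot :=
        tendsto_atBot_add_const_right _ _ (Tendsto.const_mul_atBot hpos tendsto_id)
      have h4 := Real.tendsto_exp_atBot.comp h3
      have h5 := h4.const_mul (C S)
      simpa using h5

private lemma w1_helper
    (P : Finset (Finset ℕ)) (A B : Finset ℕ) (hA : A ∈ P) (hB : B ∈ P) (hAB : A ≠ B)
    (Δ K a : Finset ℕ → ℝ) (b : Finset ℕ → ℝ → ℝ)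
    (hΔ : ∀ S ∈ P, 0 < Δ S)
    (haAB : a A = a B)
    (hgap : ∀ S ∈ P, S ≠ A → S ≠ B → a B < a S)
    (l : Filter ℝ)
    (hb : Tendsto (fun ξ => b A ξ - b B ξ) l atBot)
    (ε : ℝ) (hε : 0 < ε) :
    ∀ᶠ ξ in l, ∃ Y : ℝ, ∀ y ≤ -Y,
      |(∑ S ∈ P, Δ S * K S * Real.exp (a S * y + b S ξ)) /
        (∑ S ∈ P, Δ S * Real.exp (a S * y + b S ξ)) - K B| < ε := by
  have hΔA := hΔ A hA
  have hΔB := hΔ B hB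
  set LA : ℝ → ℝ := fun ξ => Δ A * K A * Real.exp (b A ξ) + Δ B * K B * Real.exp (b B ξ)
    with hLA
  set LD : ℝ → ℝ := fun ξ => Δ A * Real.exp (b A ξ) + Δ B * Real.exp (b B ξ) with hLD
  have hLDpos : ∀ ξ, 0 < LD ξ := fun ξ =>
    add_pos (mul_pos hΔA (Real.exp_pos _)) (mul_pos hΔB (Real.exp_pos _))
  have hbound : ∀ ξ, |LA ξ / LD ξ - K B|
      ≤ Δ A / Δ B * |K A - K B| * Real.exp (b A ξ - b B ξ) := by
    intro ξ
    have hne := (hLDpos ξ).ne'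
    have h1 : LA ξ / LD ξ - K B = Δ A * (K A - K B) * Real.exp (b A ξ) / LD ξ := by
      rw [eq_div_iff hne, sub_mul, div_mul_cancel₀ _ hne, hLA, hLD]
      ring
    rw [h1, abs_div, abs_of_pos (hLDpos ξ), div_le_iff₀ (hLDpos ξ)]
    calc |Δ A * (K A - K B) * Real.exp (b A ξ)|
        = Δ A * |K A - K B| * Real.exp (b A ξ) := by
          rw [abs_mul, abs_mul, abs_of_pos hΔA, abs_of_pos (Real.exp_pos _)]
      _ = (Δ A / Δ B * |K A - K B| * Real.exp (b A ξ - b B ξ)) * (Δ B * Real.exp (b B ξ)) := by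
          rw [Real.exp_sub]
          field_simp
          try ring
      _ ≤ (Δ A / Δ B * |K A - K B| * Real.exp (b A ξ - b B ξ)) * LD ξ := by
          apply mul_le_mul_of_nonneg_left
          · rw [hLD]
            exact le_add_of_nonneg_left (mul_pos hΔA (Real.exp_pos _)).le
          · positivity
  have h2 : Tendsto (fun ξ => Δ A / Δ B * |K A - K B| * Real.exp (b A ξ - b B ξ)) l (𝓝 0) := by
    have h := Real.tendsto_exp_atBot.comp hb
    have h' := h.const_mul (Δ A / Δ B * |K A - K B|)
    simpa [Function.comp] using h'
  have h3 : ∀ᶠ ξ in l, Δ A / Δ B * |K A - K B| * Real.exp (b A ξ - b B ξ) < ε / 2 :=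
    h2.eventually (gt_mem_nhds (half_pos hε))
  filter_upwards [h3] with ξ hξ
  have hNt := sum_tendsto_aux P A B hA hB hAB (fun S => Δ S * K S) (fun S => b S ξ) a haAB hgap
  have hDt := sum_tendsto_aux P A B hA hB hAB (fun S => Δ S) (fun S => b S ξ) a haAB hgap
  have hkey : Tendsto (fun y => (∑ S ∈ P, Δ S * K S * Real.exp (a S * y + b S ξ)) /
      (∑ S ∈ P, Δ S * Real.exp (a S * y + b S ξ))) atBot (𝓝 (LA ξ / LD ξ)) := by
    have heq : (fun y => (∑ S ∈ P, Δ S * K S * Real.exp (a S * y + b S ξ)) /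
        (∑ S ∈ P, Δ S * Real.exp (a S * y + b S ξ)))
        = fun y => (∑ S ∈ P, Δ S * K S * Real.exp ((a S - a B) * y + b S ξ)) /
          (∑ S ∈ P, Δ S * Real.exp ((a S - a B) * y + b S ξ)) := by
      funext y
      have e1 : ∑ S ∈ P, Δ S * K S * Real.exp ((a S - a B) * y + b S ξ)
          = (∑ S ∈ P, Δ S * K S * Real.exp (a S * y + b S ξ)) * Real.exp (-(a B * y)) := by
        rw [Finset.sum_mul]
        refine Finset.sum_congr rfl fun S _ => ?_
        have harg : (a S - a B) * y + b S ξ = (a S * y + b S ξ) + -(a B * y) := by ring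
        rw [harg, Real.exp_add]
        ring
      have e2 : ∑ S ∈ P, Δ S * Real.exp ((a S - a B) * y + b S ξ)
          = (∑ S ∈ P, Δ S * Real.exp (a S * y + b S ξ)) * Real.exp (-(a B * y)) := by
        rw [Finset.sum_mul]
        refine Finset.sum_congr rfl fun S _ => ?_
        have harg : (a S - a B) * y + b S ξ = (a S * y + b S ξ) + -(a B * y) := by ring
        rw [harg, Real.exp_add]
        ring
      rw [e1, e2, mul_div_mul_right _ _ (Real.exp_ne_zero _)]
    rw [heq]
    exact hNt.div hDt (hLDpos ξ).ne'
  have h5 := Metric.tendsto_nhds.mp hkey (ε / 2) (half_pos hε)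
  rw [eventually_atBot] at h5
  obtain ⟨y₀, hy₀⟩ := h5
  refine ⟨-y₀, fun y hy => ?_⟩
  have hyy : y ≤ y₀ := by simpa using hy
  have hd := hy₀ y hyy
  rw [Real.dist_eq] at hd
  have hb2 := lt_of_le_of_lt (hbound ξ) hξ
  calc |(∑ S ∈ P, Δ S * K S * Real.exp (a S * y + b S ξ)) /
        (∑ S ∈ P, Δ S * Real.exp (a S * y + b S ξ)) - K B|
      ≤ |(∑ S ∈ P, Δ S * K S * Real.exp (a S * y + b S ξ)) /
        (∑ S ∈ P, Δ S * Real.exp (a S * y + b S ξ)) - LA ξ / LD ξ| + |LA ξ / LD ξ - K B| :=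
        abs_sub_le _ _ _
    _ < ε / 2 + ε / 2 := add_lt_add hd hb2
    _ = ε := add_halves ε

theorem w1_asymptotics_y_to_neg_infty
    (N : ℕ) (hN : 2 ≤ N)
    (M : ℕ) (hM1 : 1 ≤ M) (hM2 : M ≤ N - 1)
    (k θ0 : ℕ → ℝ)
    (hk : ∀ a b, 1 ≤ a → a < b → b ≤ N → k a < k b)
    (θ : ℕ → ℝ → ℝ → ℝ)
    (hθ : ∀ i x y, θ i x y = -(k i) * x + (k i) ^ 2 * y + θ0 i)
    (Δ : Finset ℕ → ℝ)
    (hΔ : ∀ S, Δ S = ∏ j ∈ S, ∏ l ∈ S.filter (fun l => j < l), (k j - k l) ^ 2)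
    (τ : ℝ → ℝ → ℝ)
    (hτ : ∀ x y, τ x y = ∑ S ∈ Finset.powersetCard M (Finset.Icc 1 N),
        Δ S * Real.exp (∑ j ∈ S, θ j x y))
    (w1 : ℝ → ℝ → ℝ)
    (hw1 : ∀ x y, w1 x y = -(deriv (fun x' => τ x' y) x) / τ x y)
    (i : ℕ) (hi1 : 1 ≤ i) (hi2 : i ≤ N - M)
    (c : ℝ) (hc : c = k i + k (M + i)) :
    (∀ ε > (0 : ℝ), ∃ Ξ : ℝ, ∀ ξ ≤ -Ξ, ∃ Y : ℝ, ∀ y ≤ -Y,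
        |w1 (c * y + ξ) y - ∑ j ∈ Finset.Icc (i + 1) (M + i), k j| < ε) ∧
    (∀ ε > (0 : ℝ), ∃ Ξ : ℝ, ∀ ξ ≥ Ξ, ∃ Y : ℝ, ∀ y ≤ -Y,
        |w1 (c * y + ξ) y - ∑ j ∈ Finset.Icc i (M + i - 1), k j| < ε) := by
  have hMN : M + i ≤ N := by omega
  set P := Finset.powersetCard M (Finset.Icc 1 N) with hP
  set S₁ := Finset.Icc i (M + i - 1) with hS₁e
  set S₂ := Finset.Icc (i + 1) (M + i) with hS₂e
  set KK : Finset ℕ → ℝ := fun S => ∑ j ∈ S, k j with hKK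
  set aa : Finset ℕ → ℝ := fun S => ∑ j ∈ S, ((k j) ^ 2 - c * k j) with haa
  set bb : Finset ℕ → ℝ → ℝ := fun S ξ => (∑ j ∈ S, θ0 j) - KK S * ξ with hbb
  -- membership facts
  have hS₁P : S₁ ∈ P := by
    rw [hP, hS₁e, Finset.mem_powersetCard]
    constructor
    · intro x hx
      rw [Finset.mem_Icc] at hx ⊢
      omega
    · rw [Nat.card_Icc]; omega
  have hS₂P : S₂ ∈ P := by
    rw [hP, hS₂e, Finset.mem_powersetCard]
    constructor
    · intro x hx
      rw [Finset.mem_Icc] at hx ⊢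
      omega
    · rw [Nat.card_Icc]; omega
  have hS₁₂ : S₁ ≠ S₂ := by
    intro h
    have h1 : i ∈ S₁ := by rw [hS₁e, Finset.mem_Icc]; omega
    rw [h, hS₂e, Finset.mem_Icc] at h1
    omega
  -- positivity of Δ
  have hΔpos : ∀ S ∈ P, 0 < Δ S := by
    intro S hS
    rw [hP] at hS
    obtain ⟨hSsub, -⟩ := Finset.mem_powersetCard.mp hS
    rw [hΔ]
    apply Finset.prod_pos
    intro j hj
    apply Finset.prod_pos
    intro l hl
    obtain ⟨hlS, hjl⟩ := Finset.mem_filter.mp hl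
    have h1 : 1 ≤ j := by
      have := hSsub hj; rw [Finset.mem_Icc] at this; omega
    have h2 : l ≤ N := by
      have := hSsub hlS; rw [Finset.mem_Icc] at this; omega
    have hlt := hk j l h1 hjl h2
    have hne : k j - k l ≠ 0 := sub_ne_zero.mpr (ne_of_lt hlt)
    exact lt_of_le_of_ne (sq_nonneg _) (Ne.symm (pow_ne_zero 2 hne))
  -- decompositions of S₁ and S₂
  have hmid1 : S₁ = insert i (Finset.Icc (i + 1) (M + i - 1)) := by
    rw [hS₁e]
    ext x
    simp only [Finset.mem_insert, Finset.mem_Icc]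
    omega
  have hmid2 : S₂ = insert (M + i) (Finset.Icc (i + 1) (M + i - 1)) := by
    rw [hS₂e]
    ext x
    simp only [Finset.mem_insert, Finset.mem_Icc]
    omega
  have hnm1 : i ∉ Finset.Icc (i + 1) (M + i - 1) := by
    rw [Finset.mem_Icc]; omega
  have hnm2 : M + i ∉ Finset.Icc (i + 1) (M + i - 1) := by
    rw [Finset.mem_Icc]; omega
  have hK12 : KK S₂ - KK S₁ = k (M + i) - k i := by
    simp only [hKK]
    rw [hmid1, hmid2, Finset.sum_insert hnm1, Finset.sum_insert hnm2]
    ring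
  have haa12 : aa S₁ = aa S₂ := by
    simp only [haa]
    rw [hmid1, hmid2, Finset.sum_insert hnm1, Finset.sum_insert hnm2, hc]
    ring
  have hkpos : 0 < KK S₂ - KK S₁ := by
    rw [hK12]
    have := hk i (M + i) hi1 (by omega) hMN
    linarith
  -- the gap property
  have hgap : ∀ S ∈ P, S ≠ S₁ → S ≠ S₂ → aa S₂ < aa S := by
    intro S hSP hne1 hne2
    rw [← haa12]
    simp only [haa]
    rw [hP] at hSP
    obtain ⟨hSsub, hScard⟩ := Finset.mem_powersetCard.mp hSP
    have hS₁card : S₁.card = M := by rw [hS₁e, Nat.card_Icc]; omega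
    set g : ℕ → ℝ := fun j => (k j - k i) * (k j - k (M + i)) with hg
    have hfg : ∀ j : ℕ, (k j) ^ 2 - c * k j = g j - k i * k (M + i) := by
      intro j; simp only [hg, hc]; ring
    have hsplit : ∀ T U : Finset ℕ, ∑ j ∈ T, ((k j) ^ 2 - c * k j)
        = (∑ j ∈ T \ U, ((k j) ^ 2 - c * k j)) + ∑ j ∈ T ∩ U, ((k j) ^ 2 - c * k j) :=
      fun T U => by rw [add_comm, Finset.sum_inter_add_sum_sdiff]
    have hTg : ∀ T : Finset ℕ, ∑ j ∈ T, ((k j) ^ 2 - c * k j)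
        = (∑ j ∈ T, g j) - T.card * (k i * k (M + i)) := by
      intro T
      rw [Finset.sum_congr rfl fun j _ => hfg j, Finset.sum_sub_distrib, Finset.sum_const,
        nsmul_eq_mul]
    have hcards : (S \ S₁).card = (S₁ \ S).card := by
      have h1 := Finset.card_sdiff_add_card_inter S S₁
      have h2 := Finset.card_sdiff_add_card_inter S₁ S
      rw [Finset.inter_comm] at h2
      omega
    have hmemS : ∀ j ∈ S, 1 ≤ j ∧ j ≤ N := by
      intro j hj
      have := hSsub hj; rw [Finset.mem_Icc] at this; exact this
    have hsub1 : ∀ j ∈ S₁ \ S, g j ≤ 0 := by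
      intro j hj
      have hj1 : i ≤ j ∧ j ≤ M + i - 1 := by
        have := (Finset.mem_sdiff.mp hj).1
        rw [hS₁e, Finset.mem_Icc] at this
        exact this
      have hki : k i ≤ k j := by
        rcases eq_or_lt_of_le hj1.1 with h | h
        · rw [← h]
        · exact (hk i j hi1 h (by omega)).le
      have hkMi : k j < k (M + i) := hk j (M + i) (by omega) (by omega) hMN
      have hcert : 0 ≤ (k j - k i) * (k (M + i) - k j) :=
        mul_nonneg (by linarith) (by linarith)
      simp only [hg]
      nlinarith
    have hsub2 : ∀ j ∈ S \ S₁, 0 ≤ g j := by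
      intro j hj
      obtain ⟨hjS, hjn⟩ := Finset.mem_sdiff.mp hj
      have hjb := hmemS j hjS
      rw [hS₁e, Finset.mem_Icc] at hjn
      simp only [hg]
      rcases (by omega : j < i ∨ M + i ≤ j) with h | h
      · have h1 : k j < k i := hk j i hjb.1 h (by omega)
        have h2 : k j < k (M + i) := hk j (M + i) hjb.1 (by omega) hMN
        nlinarith
      · have h1 : k i < k j := hk i j hi1 (by omega) hjb.2
        have h2 : k (M + i) ≤ k j := by
          rcases eq_or_lt_of_le h with hh | hh
          · rw [hh]
          · exact (hk (M + i) j (by omega) hh hjb.2).le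
        exact mul_nonneg (by linarith) (by linarith)
    have hsub2' : ∀ j ∈ S \ S₁, j ≠ M + i → 0 < g j := by
      intro j hj hjne
      obtain ⟨hjS, hjn⟩ := Finset.mem_sdiff.mp hj
      have hjb := hmemS j hjS
      rw [hS₁e, Finset.mem_Icc] at hjn
      simp only [hg]
      rcases (by omega : j < i ∨ M + i < j) with h | h
      · have h1 : k j < k i := hk j i hjb.1 h (by omega)
        have h2 : k j < k (M + i) := hk j (M + i) hjb.1 (by omega) hMN
        exact mul_pos_of_neg_of_neg (by linarith) (by linarith)
      · have h1 : k i < k j := hk i j hi1 (by omega) hjb.2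
        have h2 : k (M + i) < k j := hk (M + i) j (by omega) h hjb.2
        exact mul_pos (by linarith) (by linarith)
    have hSdne : (S \ S₁).Nonempty := by
      rw [Finset.sdiff_nonempty]
      intro hsub
      exact hne1 (Finset.eq_of_subset_of_card_le hsub (by omega))
    have hmain : ∑ j ∈ S₁ \ S, g j < ∑ j ∈ S \ S₁, g j := by
      by_cases hall : ∀ j ∈ S \ S₁, j = M + i
      · have hsing : S \ S₁ = {M + i} :=
          Finset.eq_singleton_iff_nonempty_unique_mem.mpr ⟨hSdne, hall⟩
        have hc1 : (S₁ \ S).card = 1 := by rw [← hcards, hsing, Finset.card_singleton]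
        obtain ⟨t, ht⟩ := Finset.card_eq_one.mp hc1
        have htmem : t ∈ S₁ := (Finset.mem_sdiff.mp (ht ▸ Finset.mem_singleton_self t)).1
        have hti' : i ≤ t ∧ t ≤ M + i - 1 := by
          rw [hS₁e, Finset.mem_Icc] at htmem; exact htmem
        by_cases hti : t = i
        · exfalso
          apply hne2
          have hSeq : S = {M + i} ∪ (S₁ \ {t}) := by
            conv_lhs => rw [← Finset.sdiff_union_inter S S₁]
            rw [hsing, Finset.inter_comm, ← Finset.sdiff_sdiff_self_left S₁ S, ht]
          rw [hSeq, hti, hS₁e, hS₂e]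
          ext x
          simp only [Finset.mem_union, Finset.mem_sdiff, Finset.mem_Icc, Finset.mem_singleton]
          omega
        · have hgt : g t < 0 := by
            have h1 : k i < k t := hk i t hi1 (by omega) (by omega)
            have h2 : k t < k (M + i) := hk t (M + i) (by omega) (by omega) hMN
            simp only [hg]
            exact mul_neg_of_pos_of_neg (by linarith) (by linarith)
          have hgMi : g (M + i) = 0 := by simp [hg]
          rw [ht, hsing, Finset.sum_singleton, Finset.sum_singleton, hgMi]
          exact hgt
      · push_neg at hall
        obtain ⟨j₀, hj₀m, hj₀⟩ := hall
        have hpos : 0 < ∑ j ∈ S \ S₁, g j :=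
          Finset.sum_pos' hsub2 ⟨j₀, hj₀m, hsub2' j₀ hj₀m hj₀⟩
        have hnp : ∑ j ∈ S₁ \ S, g j ≤ 0 := Finset.sum_nonpos hsub1
        linarith
    have e1 := hsplit S S₁
    have e2 := hsplit S₁ S
    have e3 := hTg (S \ S₁)
    rw [hcards] at e3
    have e4 := hTg (S₁ \ S)
    have e5 : ∑ j ∈ S ∩ S₁, ((k j) ^ 2 - c * k j) = ∑ j ∈ S₁ ∩ S, ((k j) ^ 2 - c * k j) := by
      rw [Finset.inter_comm]
    linarith
  -- rewriting w1 along the line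
  have hargS : ∀ (S : Finset ℕ) (x' y : ℝ), ∑ j ∈ S, θ j x' y
      = -(KK S) * x' + ∑ j ∈ S, ((k j) ^ 2 * y + θ0 j) := by
    intro S x' y
    have h : ∀ j ∈ S, θ j x' y = -(k j) * x' + ((k j) ^ 2 * y + θ0 j) := fun j _ => by
      rw [hθ]; ring
    rw [Finset.sum_congr rfl h, Finset.sum_add_distrib, ← Finset.sum_mul,
      Finset.sum_neg_distrib]
  have hτdiff : ∀ (y x : ℝ), deriv (fun x' => τ x' y) x
      = ∑ S ∈ P, Δ S * (Real.exp (-(KK S) * x + ∑ j ∈ S, ((k j) ^ 2 * y + θ0 j)) * (-(KK S))) := by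
    intro y x
    have hfun : (fun x' => τ x' y) = fun x' =>
        ∑ S ∈ P, Δ S * Real.exp (-(KK S) * x' + ∑ j ∈ S, ((k j) ^ 2 * y + θ0 j)) := by
      funext x'
      rw [hτ]
      exact Finset.sum_congr rfl fun S _ => by rw [hargS S x' y]
    rw [hfun]
    have H : HasDerivAt (fun x' => ∑ S ∈ P,
        Δ S * Real.exp (-(KK S) * x' + ∑ j ∈ S, ((k j) ^ 2 * y + θ0 j)))
        (∑ S ∈ P, Δ S * (Real.exp (-(KK S) * x + ∑ j ∈ S, ((k j) ^ 2 * y + θ0 j)) * (-(KK S)))) x := by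
      apply HasDerivAt.fun_sum
      intro S _
      have base : HasDerivAt (fun x' : ℝ => -(KK S) * x' + ∑ j ∈ S, ((k j) ^ 2 * y + θ0 j))
          (-(KK S)) x := by
        simpa using ((hasDerivAt_id x).const_mul (-(KK S))).add_const
          (∑ j ∈ S, ((k j) ^ 2 * y + θ0 j))
      exact base.exp.const_mul (Δ S)
    exact H.deriv
  have hexpeq : ∀ (S : Finset ℕ) (ξ y : ℝ),
      -(KK S) * (c * y + ξ) + ∑ j ∈ S, ((k j) ^ 2 * y + θ0 j) = aa S * y + bb S ξ := by
    intro S ξ y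
    simp only [haa, hbb, hKK, Finset.sum_add_distrib, Finset.sum_sub_distrib,
      ← Finset.sum_mul, ← Finset.mul_sum]
    ring
  have hθsum : ∀ (S : Finset ℕ) (ξ y : ℝ),
      ∑ j ∈ S, θ j (c * y + ξ) y = aa S * y + bb S ξ := by
    intro S ξ y
    rw [hargS S (c * y + ξ) y, hexpeq S ξ y]
  have hW : ∀ ξ y : ℝ, w1 (c * y + ξ) y
      = (∑ S ∈ P, Δ S * KK S * Real.exp (aa S * y + bb S ξ)) /
        (∑ S ∈ P, Δ S * Real.exp (aa S * y + bb S ξ)) := by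
    intro ξ y
    rw [hw1, hτdiff y (c * y + ξ), hτ]
    congr 1
    · rw [← Finset.sum_neg_distrib]
      refine Finset.sum_congr rfl fun S _ => ?_
      rw [hexpeq S ξ y]
      ring
    · exact Finset.sum_congr rfl fun S _ => by rw [hθsum S ξ y]
  constructor
  · -- (a) ξ → −∞
    intro ε hε
    have hbt : Tendsto (fun ξ => bb S₁ ξ - bb S₂ ξ) atBot atBot := by
      have hco : (fun ξ => bb S₁ ξ - bb S₂ ξ) = fun ξ =>
          (KK S₂ - KK S₁) * ξ + ((∑ j ∈ S₁, θ0 j) - ∑ j ∈ S₂, θ0 j) := by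
        funext ξ; simp only [hbb]; ring
      rw [hco]
      exact tendsto_atBot_add_const_right _ _ (Tendsto.const_mul_atBot hkpos tendsto_id)
    have H := w1_helper P S₁ S₂ hS₁P hS₂P hS₁₂ Δ KK aa bb hΔpos haa12 hgap atBot hbt ε hε
    rw [eventually_atBot] at H
    obtain ⟨x₀, hx₀⟩ := H
    refine ⟨-x₀, fun ξ hξ => ?_⟩
    obtain ⟨Y, hY⟩ := hx₀ ξ (by simpa using hξ)
    refine ⟨Y, fun y hy => ?_⟩
    have h := hY y hy
    rw [hW ξ y]
    simpa only [hKK] using h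
  · -- (b) ξ → +∞
    intro ε hε
    have hbt : Tendsto (fun ξ => bb S₂ ξ - bb S₁ ξ) atTop atBot := by
      have hco : (fun ξ => bb S₂ ξ - bb S₁ ξ) = fun ξ =>
          -((KK S₂ - KK S₁) * ξ) + ((∑ j ∈ S₂, θ0 j) - ∑ j ∈ S₁, θ0 j) := by
        funext ξ; simp only [hbb]; ring
      rw [hco]
      exact tendsto_atBot_add_const_right _ _
        (tendsto_neg_atTop_atBot.comp (Tendsto.const_mul_atTop hkpos tendsto_id))
    have hgap' : ∀ S ∈ P, S ≠ S₂ → S ≠ S₁ → aa S₁ < aa S := by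
      intro S hS h2 h1
      rw [haa12]
      exact hgap S hS h1 h2
    have H := w1_helper P S₂ S₁ hS₂P hS₁P (Ne.symm hS₁₂) Δ KK aa bb hΔpos haa12.symm hgap'
      atTop hbt ε hε
    rw [eventually_atTop] at H
    obtain ⟨x₀, hx₀⟩ := H
    refine ⟨x₀, fun ξ hξ => ?_⟩
    obtain ⟨Y, hY⟩ := hx₀ ξ hξ
    refine ⟨Y, fun y hy => ?_⟩
    have h := hY y hy
    rw [hW ξ y]
    simpa only [hKK] using h
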